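/- Let 𝕀 be an interval hypergraph on [n] that is closed under intersection. Then the map (i,j) ↦ A_{ij} is a bijection from ℐ𝒥_𝕀 to the set of join irreducible elements of the hypergraphic poset P_𝕀 (elements that are not minimal and cover exactly one element of P_𝕀). -/
import Mathlib


namespace IHL

/-- The hyperedges of a hypergraph, as a subtype. -/
abbrev Edge (𝕀 : Finset (Finset ℕ)) : Type := {H : Finset ℕ // H ∈ 𝕀}

/-- `ℋ` is a hypergraph on `[n] = {1,…,n}`: hyperedges are nonempty subsets of `[n]`
and all singletons belong to `ℋ`. -/
def IsHypergraph (n : ℕ) (ℋ : Finset (Finset ℕ)) : Prop :=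
  (∀ H ∈ ℋ, H.Nonempty ∧ H ⊆ Finset.Icc 1 n) ∧
    ∀ i, 1 ≤ i → i ≤ n → ({i} : Finset ℕ) ∈ ℋ

/-- `𝕀` is an interval hypergraph on `[n]`: hyperedges are intervals `[a,b] ⊆ [n]`
and all singletons belong to `𝕀`. -/
def IsIntervalHypergraph (n : ℕ) (𝕀 : Finset (Finset ℕ)) : Prop :=
  (∀ H ∈ 𝕀, ∃ a b, 1 ≤ a ∧ a ≤ b ∧ b ≤ n ∧ H = Finset.Icc a b) ∧
    ∀ i, 1 ≤ i → i ≤ n → ({i} : Finset ℕ) ∈ 𝕀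

/-- An orientation assigns to each hyperedge one of its elements. -/
def IsOrientation (𝕀 : Finset (Finset ℕ)) (O : Edge 𝕀 → ℕ) : Prop :=
  ∀ H : Edge 𝕀, O H ∈ H.1

/-- Acyclicity: there is no cyclic sequence `H_0, …, H_k` with `k ≥ 2`, `H_k = H_0`, and
`O (H (p+1)) ∈ H p \ {O (H p)}` for all `p < k`. -/
def IsAcyclic (𝕀 : Finset (Finset ℕ)) (O : Edge 𝕀 → ℕ) : Prop :=
  ¬∃ (k : ℕ) (H : ℕ → Edge 𝕀), 2 ≤ k ∧ H k = H 0 ∧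
    ∀ p < k, O (H (p + 1)) ∈ (H p).1 ∧ O (H (p + 1)) ≠ O (H p)

/-- An acyclic orientation, i.e. an element of the hypergraphic poset. -/
def AcycOr (𝕀 : Finset (Finset ℕ)) (O : Edge 𝕀 → ℕ) : Prop :=
  IsOrientation 𝕀 O ∧ IsAcyclic 𝕀 O

/-- Increasing flip from `O` to `O'` flipping `i` to `j`. -/
def IsIncFlip (n : ℕ) (𝕀 : Finset (Finset ℕ)) (i j : ℕ) (O O' : Edge 𝕀 → ℕ) : Prop :=
  O ≠ O' ∧ 1 ≤ i ∧ i < j ∧ j ≤ n ∧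
    ∀ H : Edge 𝕀,
      (O H ≠ O' H → O H = i ∧ O' H = j) ∧
      (i ∈ H.1 → j ∈ H.1 → (O H = i ↔ O' H = j))

/-- One increasing flip step between acyclic orientations. -/
def FlipStep (n : ℕ) (𝕀 : Finset (Finset ℕ)) (O O' : Edge 𝕀 → ℕ) : Prop :=
  AcycOr 𝕀 O ∧ AcycOr 𝕀 O' ∧ ∃ i j, IsIncFlip n 𝕀 i j O O'

/-- The order of the hypergraphic poset `P_𝕀`: reflexive-transitive closure of
the increasing flip relation on acyclic orientations. -/
def leP (n : ℕ) (𝕀 : Finset (Finset ℕ)) : (Edge 𝕀 → ℕ) → (Edge 𝕀 → ℕ) → Prop :=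
  Relation.ReflTransGen (FlipStep n 𝕀)

/-- Strict order of the hypergraphic poset. -/
def ltP (n : ℕ) (𝕀 : Finset (Finset ℕ)) (A B : Edge 𝕀 → ℕ) : Prop :=
  leP n 𝕀 A B ∧ A ≠ B

/-- `B` covers `A` in `P_𝕀`. -/
def CoversP (n : ℕ) (𝕀 : Finset (Finset ℕ)) (A B : Edge 𝕀 → ℕ) : Prop :=
  ltP n 𝕀 A B ∧ ¬∃ C, AcycOr 𝕀 C ∧ ltP n 𝕀 A C ∧ ltP n 𝕀 C B

/-- `𝕀` is closed under intersection. -/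
def ClosedUnderIntersection (𝕀 : Finset (Finset ℕ)) : Prop :=
  ∀ I ∈ 𝕀, ∀ J ∈ 𝕀, (I ∩ J).Nonempty → I ∩ J ∈ 𝕀

/-- `π` is a permutation of `[n]` (it fixes everything outside `[1,n]`). -/
def IsPermOn (n : ℕ) (π : Equiv.Perm ℕ) : Prop :=
  ∀ x, x ∉ Finset.Icc 1 n → π x = x

/-- The surjection `Or` from permutations to acyclic orientations:
`Or_π (H) = π (min {p : π p ∈ H})`. -/
noncomputable def orMap (𝕀 : Finset (Finset ℕ)) (π : Equiv.Perm ℕ) : Edge 𝕀 → ℕ :=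
  fun H => π (sInf {p | π p ∈ H.1})

/-- The weak order on permutations of `[n]`, via inclusion of inversion sets. -/
def weakLe (n : ℕ) (σ τ : Equiv.Perm ℕ) : Prop :=
  ∀ a b, 1 ≤ a → a < b → b ≤ n → σ.symm b < σ.symm a → τ.symm b < τ.symm a

/-- `π` contains the pattern 231. -/
def Contains231 (n : ℕ) (π : Equiv.Perm ℕ) : Prop :=
  ∃ p q r, 1 ≤ p ∧ p < q ∧ q < r ∧ r ≤ n ∧ π r < π p ∧ π p < π q

/-- `π` contains the pattern 213. -/
def Contains213 (n : ℕ) (π : Equiv.Perm ℕ) : Prop :=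
  ∃ p q r, 1 ≤ p ∧ p < q ∧ q < r ∧ r ≤ n ∧ π q < π p ∧ π p < π r

/-- The partial order `≺_A`: transitive closure of `A H ≺ h` for `h ∈ H \ {A H}`. -/
def prec (𝕀 : Finset (Finset ℕ)) (A : Edge 𝕀 → ℕ) : ℕ → ℕ → Prop :=
  Relation.TransGen fun a b => ∃ H : Edge 𝕀, A H = a ∧ b ∈ H.1 ∧ b ≠ a

/-- The distributivity condition on interval hypergraphs: for all `I, J ∈ 𝕀` with
`I ⊈ J`, `J ⊈ I` and `I ∩ J ≠ ∅`, the intersection `I ∩ J` is in `𝕀` and is initial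
or final in any `K ∈ 𝕀` containing it. -/
def IsDistribHG (𝕀 : Finset (Finset ℕ)) : Prop :=
  ∀ I ∈ 𝕀, ∀ J ∈ 𝕀, ¬I ⊆ J → ¬J ⊆ I → (I ∩ J).Nonempty →
    (I ∩ J ∈ 𝕀 ∧ ∀ K ∈ 𝕀, I ∩ J ⊆ K → ((I ∩ J).min = K.min ∨ (I ∩ J).max = K.max))

/-- `j ∈ 𝒥_𝕀 = ⋃_{I ∈ 𝕀} (I \ {min I})`. -/
def InJI (𝕀 : Finset (Finset ℕ)) (j : ℕ) : Prop :=
  ∃ I ∈ 𝕀, j ∈ I ∧ ∃ y ∈ I, y < j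

/-- `Jj` is the interval `J_j = ⋂ {I ∈ 𝕀 : j ∈ I \ {min I}}`. -/
def IsJj (𝕀 : Finset (Finset ℕ)) (j : ℕ) (Jj : Finset ℕ) : Prop :=
  ∀ x, x ∈ Jj ↔ ∀ I ∈ 𝕀, j ∈ I → (∃ y ∈ I, y < j) → x ∈ I

/-- `Aj` is the orientation `A_j` (where `μj = min J_j`):
`A_j (J) = j` if `j ∈ J` and `min J = μ_j`, and `A_j (J) = min J` otherwise. -/
def IsAj (𝕀 : Finset (Finset ℕ)) (j μj : ℕ) (Aj : Edge 𝕀 → ℕ) : Prop :=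
  ∀ J : Edge 𝕀,
    (j ∈ J.1 ∧ IsLeast (J.1 : Set ℕ) μj → Aj J = j) ∧
    (¬(j ∈ J.1 ∧ IsLeast (J.1 : Set ℕ) μj) → IsLeast (J.1 : Set ℕ) (Aj J))

/-- `Jij` is the interval `J_{ij} = ⋂ {I ∈ 𝕀 : {i,j} ⊆ I}`. -/
def IsJij (𝕀 : Finset (Finset ℕ)) (i j : ℕ) (Jij : Finset ℕ) : Prop :=
  ∀ x, x ∈ Jij ↔ ∀ I ∈ 𝕀, i ∈ I → j ∈ I → x ∈ I

/-- `(i,j) ∈ ℐ𝒥_𝕀`, where `μij = min J_{ij}`: both lie in a common hyperedge and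
`i = max ([μ_{ij}, j) \ ⋃ {J \ {min J} : J ∈ 𝕀, J ⊆ [μ_{ij}, j)})`. -/
def InIJ (n : ℕ) (𝕀 : Finset (Finset ℕ)) (i j μij : ℕ) : Prop :=
  1 ≤ i ∧ i < j ∧ j ≤ n ∧ (∃ I ∈ 𝕀, i ∈ I ∧ j ∈ I) ∧
    IsGreatest {m | μij ≤ m ∧ m < j ∧
      ∀ J ∈ 𝕀, (∀ x ∈ J, μij ≤ x ∧ x < j) → m ∈ J → ∀ y ∈ J, m ≤ y} i

/-- `Aij` is the orientation `A_{ij}` (where `μij = min J_{ij}`):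
`A_{ij} (J) = j` if `j ∈ J` and `min J ≥ μ_{ij}`, and `A_{ij} (J) = min J` otherwise. -/
def IsAij (𝕀 : Finset (Finset ℕ)) (j μij : ℕ) (Aij : Edge 𝕀 → ℕ) : Prop :=
  ∀ J : Edge 𝕀,
    (j ∈ J.1 ∧ (∀ x ∈ J.1, μij ≤ x) → Aij J = j) ∧
    (¬(j ∈ J.1 ∧ (∀ x ∈ J.1, μij ≤ x)) → IsLeast (J.1 : Set ℕ) (Aij J))

/-- The reversal `x ↦ n - x + 1` on `[n]`. -/
def revPt (n x : ℕ) : ℕ := n - x + 1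

/-- The reversed hypergraph `ℋ↔`. -/
def revHG (n : ℕ) (ℋ : Finset (Finset ℕ)) : Finset (Finset ℕ) :=
  ℋ.image fun H => H.image (revPt n)


open Classical in
/-- min of a finset of naturals -/
noncomputable def emin (H : Finset ℕ) : ℕ := sInf (H : Set ℕ)

section Dev

variable {n : ℕ} {𝕀 : Finset (Finset ℕ)}

lemma edge_between (h : IsIntervalHypergraph n 𝕀) (H : Edge 𝕀) {x y z : ℕ}
    (hx : x ∈ H.1) (hy : y ∈ H.1) (h1 : x ≤ z) (h2 : z ≤ y) : z ∈ H.1 := by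
  obtain ⟨a, b, -, -, -, hab⟩ := h.1 H.1 H.2
  rw [hab] at hx hy ⊢
  simp only [Finset.mem_Icc] at *
  exact ⟨le_trans hx.1 h1, le_trans h2 hy.2⟩

lemma edge_sub (h : IsIntervalHypergraph n 𝕀) (H : Edge 𝕀) : H.1 ⊆ Finset.Icc 1 n := by
  obtain ⟨a, b, ha, hab', hb, hab⟩ := h.1 H.1 H.2
  rw [hab]
  intro x hx
  simp only [Finset.mem_Icc] at *
  exact ⟨le_trans ha hx.1, le_trans hx.2 hb⟩

lemma edge_nonempty (h : IsIntervalHypergraph n 𝕀) (H : Edge 𝕀) : H.1.Nonempty := by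
  obtain ⟨a, b, ha, hab', hb, hab⟩ := h.1 H.1 H.2
  rw [hab]; exact ⟨a, Finset.mem_Icc.2 ⟨le_refl a, hab'⟩⟩

lemma emin_mem (h : IsIntervalHypergraph n 𝕀) (H : Edge 𝕀) : emin H.1 ∈ H.1 := by
  have := Nat.sInf_mem (s := (H.1 : Set ℕ)) (by
    obtain ⟨x, hx⟩ := edge_nonempty h H
    exact ⟨x, by exact_mod_cast hx⟩)
  exact_mod_cast this

lemma emin_le (H : Edge 𝕀) {x : ℕ} (hx : x ∈ H.1) : emin H.1 ≤ x :=
  Nat.sInf_le (by exact_mod_cast hx)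

lemma emin_isLeast (h : IsIntervalHypergraph n 𝕀) (H : Edge 𝕀) :
    IsLeast (H.1 : Set ℕ) (emin H.1) :=
  ⟨by exact_mod_cast emin_mem h H, fun x hx => emin_le H (by exact_mod_cast hx)⟩

lemma edge_pos (h : IsIntervalHypergraph n 𝕀) (H : Edge 𝕀) {x : ℕ} (hx : x ∈ H.1) :
    1 ≤ x ∧ x ≤ n := by
  have := edge_sub h H hx; simpa using Finset.mem_Icc.1 this

/-- the arrow relation of an orientation -/
def arr (𝕀 : Finset (Finset ℕ)) (B : Edge 𝕀 → ℕ) (a b : ℕ) : Prop :=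
  ∃ K : Edge 𝕀, B K = a ∧ b ∈ K.1 ∧ b ≠ a

lemma acyclic_of_rank {B : Edge 𝕀 → ℕ} (r : ℕ → ℕ)
    (h : ∀ a b, arr 𝕀 B a b → r a < r b) : IsAcyclic 𝕀 B := by
  rintro ⟨k, H, hk2, hk0, hcyc⟩
  have key : ∀ p, p ≤ k → r (B (H 0)) + p ≤ r (B (H p)) := by
    intro p hp
    induction p with
    | zero => simp
    | succ q ih =>
      have hq : q < k := lt_of_lt_of_le (Nat.lt_succ_self q) hp
      have h1 := ih (le_of_lt hq)
      have h2 : r (B (H q)) < r (B (H (q + 1))) := by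
        apply h
        exact ⟨H q, rfl, (hcyc q hq).1, (hcyc q hq).2⟩
      omega
  have := key k (le_refl k)
  rw [hk0] at this
  omega

/-- paths of a given length in the arrow graph -/
def pathN (𝕀 : Finset (Finset ℕ)) (B : Edge 𝕀 → ℕ) (r : ℕ) (a b : ℕ) : Prop :=
  ∃ f : ℕ → ℕ, f 0 = a ∧ f r = b ∧ ∀ p < r, arr 𝕀 B (f p) (f (p + 1))

/-- nonempty paths -/
def pth (𝕀 : Finset (Finset ℕ)) (B : Edge 𝕀 → ℕ) (a b : ℕ) : Prop :=
  ∃ r, 1 ≤ r ∧ pathN 𝕀 B r a b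

lemma arr_pth {B : Edge 𝕀 → ℕ} {a b : ℕ} (h : arr 𝕀 B a b) : pth 𝕀 B a b := by
  refine ⟨1, le_refl 1, fun p => if p = 0 then a else b, by simp, by simp, ?_⟩
  intro p hp
  interval_cases p
  simpa using h

lemma pth_snoc {B : Edge 𝕀 → ℕ} {a b c : ℕ} (h : pth 𝕀 B a b) (h2 : arr 𝕀 B b c) :
    pth 𝕀 B a c := by
  obtain ⟨r, hr, f, hf0, hfr, hstep⟩ := h
  refine ⟨r + 1, by omega, fun p => if p = r + 1 then c else f p, by simp [Nat.succ_ne_zero]; omega, by simp, ?_⟩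
  intro p hp
  by_cases hpr : p = r
  · subst hpr
    simp only []
    rw [show (if p = p + 1 then c else f p) = f p from if_neg (by omega), hfr]
    simpa using h2
  · have hp1 : p + 1 ≠ r + 1 := by omega
    have hp2 : p ≠ r + 1 := by omega
    simp only [if_neg hp1, if_neg hp2]
    exact hstep p (by omega)

end Dev

section Dev2

variable {n : ℕ} {𝕀 : Finset (Finset ℕ)}

lemma pth_trans {B : Edge 𝕀 → ℕ} {a b c : ℕ} (h1 : pth 𝕀 B a b) (h2 : pth 𝕀 B b c) :
    pth 𝕀 B a c := by
  obtain ⟨r1, hr1, f, hf0, hfr, hfstep⟩ := h1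
  obtain ⟨r2, hr2, g, hg0, hgr, hgstep⟩ := h2
  refine ⟨r1 + r2, by omega, fun p => if p ≤ r1 then f p else g (p - r1), ?_, ?_, ?_⟩
  · show (if 0 ≤ r1 then f 0 else g (0 - r1)) = a
    rw [if_pos (by omega)]; exact hf0
  · show (if r1 + r2 ≤ r1 then f (r1 + r2) else g (r1 + r2 - r1)) = c
    rw [if_neg (by omega), show r1 + r2 - r1 = r2 by omega]; exact hgr
  · intro p hp
    show arr 𝕀 B (if p ≤ r1 then f p else g (p - r1))
      (if p + 1 ≤ r1 then f (p + 1) else g (p + 1 - r1))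
    rcases lt_trichotomy p r1 with hlt | heq | hgt
    · by_cases hp1 : p + 1 ≤ r1
      · rw [if_pos (by omega), if_pos hp1]
        exact hfstep p hlt
      · rw [if_pos (by omega), if_neg hp1, show p + 1 - r1 = 0 by omega, hg0, ← hfr,
          show r1 = p + 1 by omega]
        exact hfstep p hlt
    · subst heq
      rw [if_pos (le_refl p), if_neg (by omega), show p + 1 - p = 1 by omega, hfr, ← hg0]
      exact hgstep 0 (by omega)
    · rw [if_neg (by omega), if_neg (by omega), show p + 1 - r1 = (p - r1) + 1 by omega]
      exact hgstep (p - r1) (by omega)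

lemma pth_cons {B : Edge 𝕀 → ℕ} {a b c : ℕ} (h1 : arr 𝕀 B a b) (h2 : pth 𝕀 B b c) :
    pth 𝕀 B a c := pth_trans (arr_pth h1) h2

lemma pth_last {B : Edge 𝕀 → ℕ} {r : ℕ} {a b : ℕ} (hr : 1 ≤ r) (h : pathN 𝕀 B r a b) :
    ∃ c, pathN 𝕀 B (r - 1) a c ∧ arr 𝕀 B c b := by
  obtain ⟨f, hf0, hfr, hstep⟩ := h
  refine ⟨f (r - 1), ⟨f, hf0, rfl, fun p hp => hstep p (by omega)⟩, ?_⟩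
  have := hstep (r - 1) (by omega)
  rwa [show r - 1 + 1 = r by omega, hfr] at this

lemma not_pth_self {B : Edge 𝕀 → ℕ} (hB : IsAcyclic 𝕀 B) (a : ℕ) : ¬ pth 𝕀 B a a := by
  rintro ⟨r, hr, f, hf0, hfr, hstep⟩
  rcases eq_or_lt_of_le hr with h1 | h2
  · obtain ⟨K, hK1, hK2, hK3⟩ := hstep 0 (by omega)
    apply hK3
    rw [show (0 : ℕ) + 1 = r by omega, hfr, hf0]
  · -- r ≥ 2 : build a cycle
    have hrpos : 0 < r := by omega
    have hchoice : ∀ q, q < r → ∃ K : Edge 𝕀, B K = f q ∧ f (q + 1) ∈ K.1 ∧ f (q + 1) ≠ f q :=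
      fun q hq => hstep q hq
    choose K hK1 hK2 hK3 using hchoice
    set K' : ℕ → Edge 𝕀 := fun q => if h : q < r then K q h else K 0 hrpos with hK'
    have hK'1 : ∀ q, q < r → B (K' q) = f q := by
      intro q hq; simp only [hK', dif_pos hq]; exact hK1 q hq
    have hK'2 : ∀ q, q < r → f (q + 1) ∈ (K' q).1 := by
      intro q hq; simp only [hK', dif_pos hq]; exact hK2 q hq
    apply hB
    refine ⟨r, fun p => K' (p % r), h2, by simp [Nat.mod_self], ?_⟩
    intro p hp
    show B (K' ((p + 1) % r)) ∈ (K' (p % r)).1 ∧ B (K' ((p + 1) % r)) ≠ B (K' (p % r))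
    have e2 : p % r = p := Nat.mod_eq_of_lt (by omega)
    by_cases hpr : p + 1 < r
    · have e1 : (p + 1) % r = p + 1 := Nat.mod_eq_of_lt hpr
      rw [e1, e2, hK'1 (p + 1) hpr, hK'1 p (by omega)]
      exact ⟨hK'2 p (by omega), hK3 p (by omega)⟩
    · have hp1 : p + 1 = r := by omega
      have e1 : (p + 1) % r = 0 := by rw [hp1, Nat.mod_self]
      rw [e1, e2, hK'1 0 (by omega), hK'1 p (by omega), hf0, ← hfr, ← hp1]
      exact ⟨hK'2 p (by omega), hK3 p (by omega)⟩

open Classical in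
/-- rank of a value: number of values with a path to it -/
noncomputable def rnk (n : ℕ) (𝕀 : Finset (Finset ℕ)) (B : Edge 𝕀 → ℕ) (z : ℕ) : ℕ :=
  ((Finset.range (n + 2)).filter (fun w => pth 𝕀 B w z)).card

lemma rnk_mono {B : Edge 𝕀 → ℕ} (h : IsIntervalHypergraph n 𝕀) (hBo : IsOrientation 𝕀 B)
    (hB : IsAcyclic 𝕀 B) {a b : ℕ} (hab : arr 𝕀 B a b) : rnk n 𝕀 B a < rnk n 𝕀 B b := by
  classical
  apply Finset.card_lt_card
  constructor
  · intro w hw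
    simp only [Finset.mem_filter, Finset.mem_range] at *
    exact ⟨hw.1, pth_snoc hw.2 hab⟩
  · intro hsub
    have ha : a ∈ (Finset.range (n + 2)).filter (fun w => pth 𝕀 B w b) := by
      simp only [Finset.mem_filter, Finset.mem_range]
      obtain ⟨K, hK1, -, -⟩ := id hab
      have haK : a ∈ K.1 := by rw [← hK1]; exact hBo K
      exact ⟨by have := (edge_pos h K haK).2; omega, arr_pth hab⟩
    have := hsub ha
    simp only [Finset.mem_filter] at this
    exact not_pth_self hB a this.2

end Dev2

section Dev3

variable {n : ℕ} {𝕀 : Finset (Finset ℕ)}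

lemma flip_le {O O' : Edge 𝕀 → ℕ} (h : FlipStep n 𝕀 O O') : ∀ H, O H ≤ O' H := by
  obtain ⟨-, -, i, j, -, -, hij, -, hcond⟩ := h
  intro H
  by_cases he : O H = O' H
  · omega
  · have := (hcond H).1 he
    omega

lemma leP_le {A B : Edge 𝕀 → ℕ} (h : leP n 𝕀 A B) : ∀ H, A H ≤ B H := by
  induction h with
  | refl => intro H; exact le_refl _
  | tail hab hbc ih => intro H; exact le_trans (ih H) (flip_le hbc H)

noncomputable instance edgeFintype (𝕀 : Finset (Finset ℕ)) : Fintype (Edge 𝕀) :=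
  FinsetCoe.fintype 𝕀

noncomputable def wt (𝕀 : Finset (Finset ℕ)) (B : Edge 𝕀 → ℕ) : ℕ := ∑ H : Edge 𝕀, B H

lemma wt_lt {A B : Edge 𝕀 → ℕ} (hle : ∀ H, A H ≤ B H) (hne : A ≠ B) :
    wt 𝕀 A < wt 𝕀 B := by
  classical
  have : ∃ H, A H ≠ B H := by
    by_contra hc
    push_neg at hc
    exact hne (funext hc)
  obtain ⟨H0, hH0⟩ := this
  exact Finset.sum_lt_sum (fun H _ => hle H) ⟨H0, Finset.mem_univ H0, lt_of_le_of_ne (hle H0) hH0⟩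

lemma ltP_wt {A B : Edge 𝕀 → ℕ} (h : ltP n 𝕀 A B) : wt 𝕀 A < wt 𝕀 B :=
  wt_lt (leP_le h.1) h.2

lemma ltP_cases {D B : Edge 𝕀 → ℕ} (h : ltP n 𝕀 D B) :
    ∃ E, leP n 𝕀 D E ∧ FlipStep n 𝕀 E B := by
  rcases Relation.ReflTransGen.cases_tail h.1 with h1 | ⟨E, hDE, hEB⟩
  · exact absurd h1.symm h.2
  · exact ⟨E, hDE, hEB⟩

/-- if `C0` is the unique element covered by `B`, everything strictly below `B` is below `C0` -/
lemma climb {B C0 : Edge 𝕀 → ℕ}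
    (huniq : ∀ C, (AcycOr 𝕀 C ∧ CoversP n 𝕀 C B) → C = C0) :
    ∀ D, AcycOr 𝕀 D → ltP n 𝕀 D B → leP n 𝕀 D C0 := by
  have main : ∀ m, ∀ D, AcycOr 𝕀 D → ltP n 𝕀 D B → wt 𝕀 B - wt 𝕀 D ≤ m → leP n 𝕀 D C0 := by
    intro m
    induction m with
    | zero =>
      intro D hD hDB hm
      have := ltP_wt hDB
      omega
    | succ m ih =>
      intro D hD hDB hm
      by_cases hcov : CoversP n 𝕀 D B
      · rw [huniq D ⟨hD, hcov⟩]; exact Relation.ReflTransGen.refl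
      · rw [CoversP] at hcov
        push_neg at hcov
        obtain ⟨C, hC, hDC, hCB⟩ := hcov hDB
        have h1 := ltP_wt hDC
        have h2 := ltP_wt hCB
        exact Relation.ReflTransGen.trans hDC.1 (ih C hC hCB (by omega))
  intro D hD hDB
  exact main (wt 𝕀 B - wt 𝕀 D) D hD hDB (le_refl _)

end Dev3

open Classical in
/-- the orientation `A_{ij}` -/
noncomputable def Aform (𝕀 : Finset (Finset ℕ)) (j μ : ℕ) : Edge 𝕀 → ℕ :=
  fun H => if j ∈ H.1 ∧ ∀ x ∈ H.1, μ ≤ x then j else emin H.1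

open Classical in
/-- the orientation covered by `A_{ij}` -/
noncomputable def Cform (𝕀 : Finset (Finset ℕ)) (i j μ : ℕ) : Edge 𝕀 → ℕ :=
  fun H => if j ∈ H.1 ∧ ∀ x ∈ H.1, μ ≤ x then (if i ∈ H.1 then i else j) else emin H.1

/-- membership in the set whose max is `i` -/
def inS (𝕀 : Finset (Finset ℕ)) (j μ m : ℕ) : Prop :=
  μ ≤ m ∧ m < j ∧ ∀ J ∈ 𝕀, (∀ x ∈ J, μ ≤ x ∧ x < j) → m ∈ J → ∀ y ∈ J, m ≤ y

section Dev4

variable {n : ℕ} {𝕀 : Finset (Finset ℕ)} {j μ : ℕ} {H₀ : Edge 𝕀}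

lemma two_cycle {B : Edge 𝕀 → ℕ} (H1 H2 : Edge 𝕀) (h1 : B H2 ∈ H1.1) (h2 : B H2 ≠ B H1)
    (h3 : B H1 ∈ H2.1) : ¬ IsAcyclic 𝕀 B := by
  intro hac
  apply hac
  refine ⟨2, fun p => if p = 1 then H2 else H1, le_refl 2, by norm_num, ?_⟩
  intro p hp
  interval_cases p
  · simpa using ⟨h1, h2⟩
  · simpa using ⟨h3, fun h => h2 h.symm⟩

section withH₀

variable (h𝕀 : IsIntervalHypergraph n 𝕀)
variable (hj0 : j ∈ H₀.1) (hμ0 : μ ∈ H₀.1) (hlb : ∀ x ∈ H₀.1, μ ≤ x) (hμj : μ < j)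

include h𝕀

include hj0 hμ0 in
lemma mem_H₀ {x : ℕ} (hx1 : μ ≤ x) (hx2 : x ≤ j) : x ∈ H₀.1 :=
  edge_between h𝕀 H₀ hμ0 hj0 hx1 hx2

lemma Aform_or : IsOrientation 𝕀 (Aform 𝕀 j μ) := by
  intro H
  unfold Aform
  split
  · next hc => exact hc.1
  · exact emin_mem h𝕀 H

lemma Cform_or {i : ℕ} : IsOrientation 𝕀 (Cform 𝕀 i j μ) := by
  intro H
  unfold Cform
  split
  · next hc =>
    split
    · next hi => exact hi
    · exact hc.1
  · exact emin_mem h𝕀 H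

include hμj in
lemma Aform_acyclic : IsAcyclic 𝕀 (Aform 𝕀 j μ) := by
  apply acyclic_of_rank (fun x => if x < μ then x else if x = j then μ else x + 1)
  rintro a b ⟨K, hK, hb, hba⟩
  unfold Aform at hK
  split at hK
  · next hc =>
    subst hK
    have hbμ : μ ≤ b := hc.2 b hb
    rw [if_neg (by omega), if_pos rfl, if_neg (by omega), if_neg hba]
    omega
  · next hc =>
    subst hK
    have hab : emin K.1 ≤ b := emin_le K hb
    push_neg at hc
    by_cases hbj : b = j
    · subst hbj
      obtain ⟨x, hx, hxμ⟩ := hc hb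
      have := emin_le K hx
      rw [if_pos (by omega), if_neg (by omega), if_pos rfl]
      omega
    · have haj : emin K.1 ≠ j := by
        intro he
        obtain ⟨x, hx, hxμ⟩ := hc (he ▸ emin_mem h𝕀 K)
        have := emin_le K hx
        omega
      by_cases haμ : emin K.1 < μ
      · rw [if_pos haμ]
        by_cases hbμ : b < μ
        · rw [if_pos hbμ]; omega
        · rw [if_neg hbμ, if_neg hbj]; omega
      · rw [if_neg haμ, if_neg haj, if_neg (by omega : ¬ b < μ), if_neg hbj]
        omega

include hμj in
lemma Cform_acyclic {i : ℕ} (hi : inS 𝕀 j μ i) : IsAcyclic 𝕀 (Cform 𝕀 i j μ) := by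
  obtain ⟨hiμ, hij, hiS⟩ := hi
  apply acyclic_of_rank
    (fun x => if x < μ then x else if x = i then μ else if x = j then μ + 1 else x + 2)
  rintro a b ⟨K, hK, hb, hba⟩
  unfold Cform at hK
  -- helper: an edge contained in [μ, j) containing i has min i
  have key : ∀ K' : Edge 𝕀, (∀ x ∈ K'.1, μ ≤ x) → j ∉ K'.1 → i ∈ K'.1 → ∀ y ∈ K'.1, i ≤ y := by
    intro K' h1 h2 h3 y hy
    refine hiS K'.1 K'.2 (fun x hx => ⟨h1 x hx, ?_⟩) h3 y hy
    by_contra hxj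
    exact h2 (edge_between h𝕀 K' h3 hx (le_of_lt hij) (by omega))
  split at hK
  · next hc =>
    split at hK
    · next hiK =>
      -- a = i
      subst hK
      have hbμ : μ ≤ b := hc.2 b hb
      rw [if_neg (by omega), if_pos rfl]
      by_cases hbj : b = j
      · rw [if_neg (by omega), if_neg hba, if_pos hbj]; omega
      · rw [if_neg (by omega), if_neg hba, if_neg hbj]; omega
    · next hiK =>
      -- a = j
      subst hK
      have hbμ : μ ≤ b := hc.2 b hb
      have hbi : b ≠ i := fun he => hiK (he ▸ hb)
      rw [if_neg (by omega), if_neg (by omega), if_pos rfl, if_neg (by omega), if_neg hbi,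
        if_neg hba]
      omega
  · next hc =>
    subst hK
    have hab : emin K.1 ≤ b := emin_le K hb
    have halt : emin K.1 < b := lt_of_le_of_ne hab (fun h => hba h.symm)
    push_neg at hc
    by_cases hbj : b = j
    · subst hbj
      obtain ⟨x, hx, hxμ⟩ := hc hb
      have := emin_le K hx
      rw [if_pos (by omega), if_neg (by omega), if_neg (by omega), if_pos rfl]
      omega
    · by_cases hbi : b = i
      · subst hbi
        -- emin K < i with i ∈ K : show emin K < μ
        have haμ : emin K.1 < μ := by
          by_contra hge
          push_neg at hge
          have hjK : j ∉ K.1 := by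
            intro hjK
            obtain ⟨x, hx, hxμ⟩ := hc hjK
            have := emin_le K hx
            omega
          have := key K (fun x hx => le_trans hge (emin_le K hx)) hjK hb _ (emin_mem h𝕀 K)
          omega
        rw [if_pos haμ, if_neg (by omega), if_pos rfl]
        omega
      · have haj : emin K.1 ≠ j := by
          intro he
          obtain ⟨x, hx, hxμ⟩ := hc (he ▸ emin_mem h𝕀 K)
          have := emin_le K hx
          omega
        by_cases haμ : emin K.1 < μ
        · rw [if_pos haμ]
          by_cases hbμ : b < μ
          · rw [if_pos hbμ]; omega
          · rw [if_neg hbμ, if_neg hbi, if_neg hbj]; omega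
        · push_neg at haμ
          by_cases hai : emin K.1 = i
          · rw [if_neg (by omega), if_pos hai, if_neg (by omega : ¬ b < μ), if_neg hbi,
              if_neg hbj]
            omega
          · rw [if_neg (by omega), if_neg hai, if_neg haj, if_neg (by omega : ¬ b < μ),
              if_neg hbi, if_neg hbj]
            omega

end withH₀

end Dev4

section Dev5

variable {n : ℕ} {𝕀 : Finset (Finset ℕ)} {j μ : ℕ} {H₀ : Edge 𝕀}

variable (h𝕀 : IsIntervalHypergraph n 𝕀)
variable (hj0 : j ∈ H₀.1) (hμ0 : μ ∈ H₀.1) (hlb : ∀ x ∈ H₀.1, μ ≤ x) (hμj : μ < j)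

include h𝕀 hj0 hμ0 hlb hμj

lemma flip_Cform_Aform {i : ℕ} (hi : inS 𝕀 j μ i) :
    FlipStep n 𝕀 (Cform 𝕀 i j μ) (Aform 𝕀 j μ) := by
  have hiH0 : i ∈ H₀.1 := mem_H₀ h𝕀 hj0 hμ0 hi.1 (le_of_lt hi.2.1)
  have hc0 : j ∈ H₀.1 ∧ ∀ x ∈ H₀.1, μ ≤ x := ⟨hj0, hlb⟩
  refine ⟨⟨Cform_or h𝕀, Cform_acyclic h𝕀 hμj hi⟩,
    ⟨Aform_or h𝕀, Aform_acyclic h𝕀 hμj⟩, i, j, ?_, ?_, hi.2.1, ?_, ?_⟩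
  · intro h
    have := congrFun h H₀
    unfold Cform Aform at this
    rw [if_pos hc0, if_pos hc0, if_pos hiH0] at this
    have := hi.2.1
    omega
  · have h1 := (edge_pos h𝕀 H₀ hμ0).1
    have h2 := hi.1
    omega
  · exact (edge_pos h𝕀 H₀ hj0).2
  · intro H
    constructor
    · intro hne
      unfold Cform Aform at *
      by_cases hc : j ∈ H.1 ∧ ∀ x ∈ H.1, μ ≤ x
      · rw [if_pos hc] at hne ⊢
        rw [if_pos hc] at hne ⊢
        by_cases hiH : i ∈ H.1
        · rw [if_pos hiH] at hne ⊢
          exact ⟨rfl, rfl⟩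
        · rw [if_neg hiH] at hne
          exact absurd rfl hne
      · rw [if_neg hc, if_neg hc] at hne
        exact absurd rfl hne
    · intro hiH hjH
      unfold Cform Aform
      by_cases hc : j ∈ H.1 ∧ ∀ x ∈ H.1, μ ≤ x
      · rw [if_pos hc, if_pos hc, if_pos hiH]
        simp
      · rw [if_neg hc, if_neg hc]
        constructor
        · intro he
          exact absurd ⟨hjH, fun x hx => le_trans hi.1 (he ▸ emin_le H hx)⟩ hc
        · intro he
          exact absurd ⟨hjH, fun x hx => le_trans (le_of_lt hμj) (he ▸ emin_le H hx)⟩ hc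

lemma flip_into_Aform {E : Edge 𝕀 → ℕ} (hE : FlipStep n 𝕀 E (Aform 𝕀 j μ)) :
    ∃ i', inS 𝕀 j μ i' ∧ E = Cform 𝕀 i' j μ := by
  obtain ⟨hEac, hAac, u, w, hne, hu1, huw, hwn, hcond⟩ := hE
  have hch : ∃ H : Edge 𝕀, E H ≠ Aform 𝕀 j μ H := by
    by_contra h
    push_neg at h
    exact hne (funext h)
  obtain ⟨H1, hH1⟩ := hch
  obtain ⟨hEu, hAw⟩ := (hcond H1).1 hH1
  have huH1 : u ∈ H1.1 := hEu ▸ hEac.1 H1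
  have hc1 : j ∈ H1.1 ∧ ∀ x ∈ H1.1, μ ≤ x := by
    by_contra hc
    have h1 : Aform 𝕀 j μ H1 = emin H1.1 := by unfold Aform; rw [if_neg hc]
    have h2 := emin_le H1 huH1
    omega
  have hwj : w = j := by
    have : Aform 𝕀 j μ H1 = j := by unfold Aform; rw [if_pos hc1]
    omega
  rw [hwj] at huw hwn hcond
  have huμ : μ ≤ u := hc1.2 u huH1
  -- E = Cform u
  have hEC : E = Cform 𝕀 u j μ := by
    funext H
    unfold Cform
    by_cases hc : j ∈ H.1 ∧ ∀ x ∈ H.1, μ ≤ x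
    · have hAj : Aform 𝕀 j μ H = j := by unfold Aform; rw [if_pos hc]
      rw [if_pos hc]
      by_cases hiH : u ∈ H.1
      · rw [if_pos hiH]
        exact ((hcond H).2 hiH hc.1).2 hAj
      · rw [if_neg hiH]
        by_cases he : E H = Aform 𝕀 j μ H
        · omega
        · have := ((hcond H).1 he).1
          exact absurd (this ▸ hEac.1 H) hiH
    · have hAe : Aform 𝕀 j μ H = emin H.1 := by unfold Aform; rw [if_neg hc]
      rw [if_neg hc]
      by_cases he : E H = Aform 𝕀 j μ H
      · omega
      · obtain ⟨-, h2⟩ := (hcond H).1 he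
        rw [h2] at hAe
        exact absurd ⟨hAe ▸ emin_mem h𝕀 H,
          fun x hx => le_trans (le_of_lt hμj) (hAe ▸ emin_le H hx)⟩ hc
  refine ⟨u, ⟨huμ, huw, ?_⟩, hEC⟩
  -- third condition of inS via a 2-cycle
  intro J hJ hsub hmu y hy
  by_contra hyu
  push_neg at hyu
  have hjJ : j ∉ J := fun h => by have := (hsub j h).2; omega
  have huH0 : u ∈ H₀.1 := mem_H₀ h𝕀 hj0 hμ0 huμ (le_of_lt huw)
  have heJ1 : emin J ≤ y := emin_le ⟨J, hJ⟩ hy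
  have heJm := emin_mem h𝕀 ⟨J, hJ⟩
  have hCH0 : E H₀ = u := by
    rw [hEC]; unfold Cform; rw [if_pos ⟨hj0, hlb⟩, if_pos huH0]
  have hCJ : E ⟨J, hJ⟩ = emin J := by
    rw [hEC]; unfold Cform
    rw [if_neg (fun hc => hjJ hc.1)]
  apply two_cycle (𝕀 := 𝕀) H₀ ⟨J, hJ⟩ ?_ ?_ ?_ hEac.2
  · rw [hCJ]
    exact mem_H₀ h𝕀 hj0 hμ0 (hsub _ heJm).1 (le_of_lt (hsub _ heJm).2)
  · rw [hCJ, hCH0]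
    omega
  · rw [hCH0]
    exact hmu

lemma flip_Cform_Cform {i' i'' : ℕ} (hi' : inS 𝕀 j μ i') (hi'' : inS 𝕀 j μ i'')
    (hlt : i' < i'') (hNE : ∀ K : Edge 𝕀, j ∈ K.1 → i'' ∈ K.1 → i' ∈ K.1) :
    FlipStep n 𝕀 (Cform 𝕀 i' j μ) (Cform 𝕀 i'' j μ) := by
  have hij'0 : i' ∈ H₀.1 := mem_H₀ h𝕀 hj0 hμ0 hi'.1 (le_of_lt hi'.2.1)
  have hij''0 : i'' ∈ H₀.1 := mem_H₀ h𝕀 hj0 hμ0 hi''.1 (le_of_lt hi''.2.1)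
  have hc0 : j ∈ H₀.1 ∧ ∀ x ∈ H₀.1, μ ≤ x := ⟨hj0, hlb⟩
  -- helper : if some m with inS is the min of an edge H with i'' ∈ H and all elements ≥ μ
  -- and H is a "¬cond" edge, we get a contradiction with inS i''
  have subedge : ∀ H : Edge 𝕀, ¬(j ∈ H.1 ∧ ∀ x ∈ H.1, μ ≤ x) → i'' ∈ H.1 →
      μ ≤ emin H.1 → ∀ y ∈ H.1, i'' ≤ y := by
    intro H hc hiH hemin y hy
    have hij'' := hi''.2.1
    have hall : ∀ x ∈ H.1, μ ≤ x := fun x hx => le_trans hemin (emin_le H hx)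
    have hjH : j ∉ H.1 := fun hj => hc ⟨hj, hall⟩
    refine hi''.2.2 H.1 H.2 (fun x hx => ⟨hall x hx, ?_⟩) hiH y hy
    by_contra hxj
    exact hjH (edge_between h𝕀 H hiH hx (by omega) (by omega))
  refine ⟨⟨Cform_or h𝕀, Cform_acyclic h𝕀 hμj hi'⟩,
    ⟨Cform_or h𝕀, Cform_acyclic h𝕀 hμj hi''⟩, i', i'', ?_, ?_, hlt, ?_, ?_⟩
  · intro h
    have := congrFun h H₀
    unfold Cform at this
    rw [if_pos hc0, if_pos hc0, if_pos hij'0, if_pos hij''0] at this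
    omega
  · have h1 := (edge_pos h𝕀 H₀ hμ0).1
    have h2 := hi'.1
    omega
  · have h1 := (edge_pos h𝕀 H₀ hj0).2
    have h2 := hi''.2.1
    omega
  · intro H
    have hm1 := hi'.1
    have hm2 := hi''.1
    have hm3 := hi''.2.1
    constructor
    · intro hne
      unfold Cform at hne ⊢
      by_cases hc : j ∈ H.1 ∧ ∀ x ∈ H.1, μ ≤ x
      · rw [if_pos hc] at hne ⊢
        rw [if_pos hc] at hne ⊢
        by_cases hiH : i' ∈ H.1
        · have hiH'' : i'' ∈ H.1 :=
            edge_between h𝕀 H hiH hc.1 (le_of_lt hlt) (le_of_lt hi''.2.1)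
          rw [if_pos hiH, if_pos hiH''] at hne ⊢
          exact ⟨rfl, rfl⟩
        · have hiH'' : i'' ∉ H.1 := fun hch => hiH (hNE H hc.1 hch)
          rw [if_neg hiH, if_neg hiH''] at hne
          exact absurd rfl hne
      · rw [if_neg hc, if_neg hc] at hne
        exact absurd rfl hne
    · intro hiH hiH''
      unfold Cform
      by_cases hc : j ∈ H.1 ∧ ∀ x ∈ H.1, μ ≤ x
      · rw [if_pos hc, if_pos hc, if_pos hiH, if_pos hiH'']
        simp
      · rw [if_neg hc, if_neg hc]
        constructor
        · intro he
          have := subedge H hc hiH'' (by omega) i' hiH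
          omega
        · intro he
          have := subedge H hc hiH'' (by omega) i' hiH
          omega

end Dev5

section Dev6

variable {n : ℕ} {𝕀 : Finset (Finset ℕ)} {j μ : ℕ} {H₀ : Edge 𝕀}

variable (h𝕀 : IsIntervalHypergraph n 𝕀)
variable (hj0 : j ∈ H₀.1) (hμ0 : μ ∈ H₀.1) (hlb : ∀ x ∈ H₀.1, μ ≤ x) (hμj : μ < j)

include h𝕀

lemma IsAij_eq {F : Edge 𝕀 → ℕ} (hF : IsAij 𝕀 j μ F) : F = Aform 𝕀 j μ := by
  funext H
  unfold Aform
  by_cases hc : j ∈ H.1 ∧ ∀ x ∈ H.1, μ ≤ x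
  · rw [if_pos hc, (hF H).1 hc]
  · rw [if_neg hc]
    exact IsLeast.unique ((hF H).2 hc) (emin_isLeast h𝕀 H)

include hj0 hμ0 hlb hμj

lemma below_Aform {i : ℕ} (hi : inS 𝕀 j μ i) (hmax : ∀ m, inS 𝕀 j μ m → m ≤ i)
    (hNE : ∀ K : Edge 𝕀, j ∈ K.1 → i ∈ K.1 → μ ∈ K.1) :
    ∀ M, ltP n 𝕀 M (Aform 𝕀 j μ) → leP n 𝕀 M (Cform 𝕀 i j μ) := by
  intro M hM
  obtain ⟨E, hME, hEA⟩ := ltP_cases hM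
  obtain ⟨i', hi', hEC⟩ := flip_into_Aform h𝕀 hj0 hμ0 hlb hμj hEA
  subst hEC
  rcases eq_or_lt_of_le (hmax i' hi') with he | hl
  · rw [← he]
    exact hME
  · have hNE' : ∀ K : Edge 𝕀, j ∈ K.1 → i ∈ K.1 → i' ∈ K.1 := fun K hjK hiK =>
      edge_between h𝕀 K (hNE K hjK hiK) hjK hi'.1 (le_of_lt hi'.2.1)
    exact Relation.ReflTransGen.trans hME
      (Relation.ReflTransGen.single (flip_Cform_Cform h𝕀 hj0 hμ0 hlb hμj hi' hi hl hNE'))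

lemma cover_Aform {i : ℕ} (hi : inS 𝕀 j μ i) (hmax : ∀ m, inS 𝕀 j μ m → m ≤ i)
    (hNE : ∀ K : Edge 𝕀, j ∈ K.1 → i ∈ K.1 → μ ∈ K.1) :
    (AcycOr 𝕀 (Cform 𝕀 i j μ) ∧ CoversP n 𝕀 (Cform 𝕀 i j μ) (Aform 𝕀 j μ)) ∧
    ∀ B', (AcycOr 𝕀 B' ∧ CoversP n 𝕀 B' (Aform 𝕀 j μ)) → B' = Cform 𝕀 i j μ := by
  have hfs := flip_Cform_Aform h𝕀 hj0 hμ0 hlb hμj hi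
  have hne : Cform 𝕀 i j μ ≠ Aform 𝕀 j μ := by
    obtain ⟨-, -, u, w, hne, -⟩ := hfs
    exact hne
  have hlt : ltP n 𝕀 (Cform 𝕀 i j μ) (Aform 𝕀 j μ) :=
    ⟨Relation.ReflTransGen.single hfs, hne⟩
  constructor
  · refine ⟨hfs.1, hlt, ?_⟩
    rintro ⟨Cm, hCac, h1, h2⟩
    have hle := below_Aform h𝕀 hj0 hμ0 hlb hμj hi hmax hNE Cm h2
    exact h1.2 (funext fun H => le_antisymm (leP_le h1.1 H) (leP_le hle H))
  · rintro B' ⟨hB'ac, hB'cov⟩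
    have hle := below_Aform h𝕀 hj0 hμ0 hlb hμj hi hmax hNE B' hB'cov.1
    by_contra heq
    exact hB'cov.2 ⟨Cform 𝕀 i j μ, hfs.1, ⟨hle, heq⟩, hlt⟩

end Dev6

section Dev7

variable {n : ℕ} {𝕀 : Finset (Finset ℕ)}

lemma exists_H0 (h𝕀 : IsIntervalHypergraph n 𝕀) {i j : ℕ} {Jp : Finset ℕ} {μ : ℕ}
    (hJ : IsJij 𝕀 i j Jp) (hL : IsLeast ((Jp : Finset ℕ) : Set ℕ) μ)
    (hex : ∃ I ∈ 𝕀, i ∈ I ∧ j ∈ I) (hij : i < j) :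
    ∃ H₀ : Edge 𝕀, j ∈ H₀.1 ∧ μ ∈ H₀.1 ∧ (∀ x ∈ H₀.1, μ ≤ x) ∧ i ∈ H₀.1 := by
  have hμJp : μ ∈ Jp := hL.1
  have hiJp : i ∈ Jp := (hJ i).2 (fun I hI hiI hjI => hiI)
  have hμi : μ ≤ i := hL.2 (by exact_mod_cast hiJp)
  obtain ⟨I1, hI1, hiI1, hjI1⟩ := hex
  have hμ1 : 1 ≤ μ := by
    have hμI1 : μ ∈ I1 := (hJ μ).1 hμJp I1 hI1 hiI1 hjI1
    exact (edge_pos h𝕀 ⟨I1, hI1⟩ hμI1).1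
  have hmain : ∃ I ∈ 𝕀, i ∈ I ∧ j ∈ I ∧ ∀ x ∈ I, μ ≤ x := by
    by_contra hcon
    push_neg at hcon
    have : μ - 1 ∈ Jp := by
      refine (hJ (μ - 1)).2 (fun I hI hiI hjI => ?_)
      obtain ⟨x, hx, hxμ⟩ := hcon I hI hiI hjI
      exact edge_between h𝕀 ⟨I, hI⟩ hx hiI (by omega) (by omega)
    have := hL.2 (by exact_mod_cast this)
    omega
  obtain ⟨I0, hI0, hiI0, hjI0, hallI0⟩ := hmain
  exact ⟨⟨I0, hI0⟩, hjI0, (hJ μ).1 hμJp I0 hI0 hiI0 hjI0, hallI0, hiI0⟩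

end Dev7

open Classical in
/-- decreasing flip of the value `v` down to `x` -/
noncomputable def Dflip (𝕀 : Finset (Finset ℕ)) (B : Edge 𝕀 → ℕ) (x v : ℕ) : Edge 𝕀 → ℕ :=
  fun H => if B H = v ∧ x ∈ H.1 then x else B H

section Dev8

variable {n : ℕ} {𝕀 : Finset (Finset ℕ)}

lemma rnk_pth {B : Edge 𝕀 → ℕ} (h𝕀 : IsIntervalHypergraph n 𝕀) (hBo : IsOrientation 𝕀 B)
    (hBac : IsAcyclic 𝕀 B) {a b : ℕ} (h : pth 𝕀 B a b) : rnk n 𝕀 B a < rnk n 𝕀 B b := by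
  obtain ⟨r, hr, f, hf0, hfr, hstep⟩ := h
  have key : ∀ p, p ≤ r → 1 ≤ p → rnk n 𝕀 B (f 0) < rnk n 𝕀 B (f p) := by
    intro p hp hp1
    induction p with
    | zero => omega
    | succ q ih =>
      rcases Nat.eq_zero_or_pos q with hq | hq
      · subst hq
        exact rnk_mono h𝕀 hBo hBac (hstep 0 (by omega))
      · exact lt_trans (ih (by omega) (by omega))
          (rnk_mono h𝕀 hBo hBac (hstep q (by omega)))
  have := key r (le_refl r) hr
  rwa [hf0, hfr] at this

lemma pathN_zero {B : Edge 𝕀 → ℕ} {a b : ℕ} (h : pathN 𝕀 B 0 a b) : a = b := by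
  obtain ⟨f, hf0, hfr, -⟩ := h
  rw [← hf0, ← hfr]

lemma rnk_bound (B : Edge 𝕀 → ℕ) (z : ℕ) : rnk n 𝕀 B z ≤ n + 2 := by
  classical
  calc rnk n 𝕀 B z ≤ (Finset.range (n + 2)).card := Finset.card_filter_le _ _
  _ = n + 2 := Finset.card_range _

/-- Claim A : every raised value of an acyclic orientation admits a decreasing flip. -/
lemma claimA (h𝕀 : IsIntervalHypergraph n 𝕀) {B : Edge 𝕀 → ℕ} (hB : AcycOr 𝕀 B)
    {v : ℕ} (H₁ : Edge 𝕀) (hH₁ : B H₁ = v) (hraised : emin H₁.1 < v)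
    (hmin : ∀ K : Edge 𝕀, B K = v → emin H₁.1 ≤ emin K.1) :
    ∃ C, FlipStep n 𝕀 C B ∧ ∀ H, C H ≠ B H → B H = v := by
  classical
  obtain ⟨hBo, hBac⟩ := hB
  set μ' := emin H₁.1 with hμ'
  have hvH₁ : v ∈ H₁.1 := hH₁ ▸ hBo H₁
  have hmemH₁ : ∀ z, μ' ≤ z → z ≤ v → z ∈ H₁.1 :=
    fun z h1 h2 => edge_between h𝕀 H₁ (emin_mem h𝕀 H₁) hvH₁ h1 h2
  -- choose x of minimal rank in [μ', v)
  have hne : (Finset.Ico μ' v).Nonempty := ⟨μ', Finset.mem_Ico.2 ⟨le_refl _, hraised⟩⟩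
  obtain ⟨x, hxIco, hxmin⟩ := Finset.exists_min_image (Finset.Ico μ' v) (rnk n 𝕀 B) hne
  rw [Finset.mem_Ico] at hxIco
  have hxH₁ : x ∈ H₁.1 := hmemH₁ x hxIco.1 (le_of_lt hxIco.2)
  -- no edge containing x and v is oriented to x
  have hK3 : ∀ K : Edge 𝕀, x ∈ K.1 → v ∈ K.1 → B K ≠ x := by
    intro K hxK hvK hBK
    exact two_cycle H₁ K (hBK ▸ hmemH₁ x hxIco.1 (le_of_lt hxIco.2))
      (by rw [hBK, hH₁]; omega) (hH₁ ▸ hvK) hBac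
  -- the claim (∗)
  have main : ∀ r, ∀ a, pathN 𝕀 B r v a → 1 ≤ r → a ≠ x →
      (arr 𝕀 B a x ∨ (a < μ' ∧ pth 𝕀 B a x)) → False := by
    intro r
    induction r using Nat.strong_induction_on with
    | _ r IH =>
      intro a hpath hr hax hD
      have hpth_va : pth 𝕀 B v a := ⟨r, hr, hpath⟩
      have hpth_ax : pth 𝕀 B a x := hD.elim arr_pth (·.2)
      by_cases hav : a = v
      · exact not_pth_self hBac v (hav ▸ hpth_va)
      rcases lt_trichotomy a μ' with haμ | haμ | haμ
      · -- a < μ' : look at the predecessor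
        obtain ⟨b, hpathb, harrba⟩ := pth_last hr hpath
        obtain ⟨K'', hBK'', haK'', hneab⟩ := id harrba
        by_cases hbv : b = v
        · have h1 := hmin K'' (hbv ▸ hBK'')
          have h2 := emin_le K'' haK''
          omega
        · have hrm1 : 1 ≤ r - 1 := by
            rcases Nat.eq_zero_or_pos (r - 1) with h0 | h0
            · exact absurd (pathN_zero (h0 ▸ hpathb)).symm hbv
            · omega
          by_cases hbx : b = x
          · exact not_pth_self hBac x (pth_cons (hbx ▸ harrba) hpth_ax)
          rcases lt_trichotomy b μ' with hbμ | hbμ | hbμ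
          · exact IH (r - 1) (by omega) b hpathb hrm1 hbx
              (Or.inr ⟨hbμ, pth_cons harrba hpth_ax⟩)
          all_goals {
            rcases lt_trichotomy b x with hbxlt | h | hbxgt
            · -- μ' ≤ b < x : contradiction with minimality of rnk x
              have hbIco : b ∈ Finset.Ico μ' v := Finset.mem_Ico.2 ⟨by omega, by
                have := hxIco.2; omega⟩
              have := hxmin b hbIco
              have := rnk_pth h𝕀 hBo hBac (pth_cons harrba hpth_ax)
              omega
            · exact absurd h hbx
            · -- b > x : x ∈ K'' and recurse
              have hbK'' : b ∈ K''.1 := hBK'' ▸ hBo K''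
              have hxK'' : x ∈ K''.1 := edge_between h𝕀 K'' haK'' hbK'' (by omega) (by omega)
              exact IH (r - 1) (by omega) b hpathb hrm1 hbx
                (Or.inl ⟨K'', hBK'', hxK'', fun h => hbx h.symm⟩) }
      · -- a = μ' : then μ' ≤ a < v, contradiction with minimality of rnk x
        have haIco : a ∈ Finset.Ico μ' v := Finset.mem_Ico.2 ⟨by omega, by omega⟩
        have h1 := hxmin a haIco
        have h2 := rnk_pth h𝕀 hBo hBac hpth_ax
        omega
      · -- μ' < a : split on a vs v
        rcases lt_trichotomy a v with hav2 | h | hav2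
        · have haIco : a ∈ Finset.Ico μ' v := Finset.mem_Ico.2 ⟨by omega, hav2⟩
          have h1 := hxmin a haIco
          have h2 := rnk_pth h𝕀 hBo hBac hpth_ax
          omega
        · exact absurd h hav
        · -- a > v
          rcases hD with harr | ⟨h1, -⟩
          · obtain ⟨K, hBK, hxK, -⟩ := harr
            have haK : a ∈ K.1 := hBK ▸ hBo K
            have hvK : v ∈ K.1 := edge_between h𝕀 K hxK haK (by omega) (by omega)
            exact not_pth_self hBac v (pth_snoc hpth_va ⟨K, hBK, hvK, by omega⟩)
          · omega
  have hstar : ∀ a, a ≠ x → pth 𝕀 B v a → ∀ K : Edge 𝕀, x ∈ K.1 → B K = a → False := by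
    intro a hax ⟨r, hr, hpath⟩ K hxK hBK
    exact main r a hpath hr hax (Or.inl ⟨K, hBK, hxK, fun h => hax h.symm⟩)
  -- the flipped orientation
  have hx1 : 1 ≤ x := by
    have := (edge_pos h𝕀 H₁ (emin_mem h𝕀 H₁)).1
    omega
  have hvn : v ≤ n := (edge_pos h𝕀 H₁ hvH₁).2
  have hxv : x < v := hxIco.2
  have hCor : IsOrientation 𝕀 (Dflip 𝕀 B x v) := by
    intro H
    unfold Dflip
    split
    · next h => exact h.2
    · exact hBo H
  have hCH₁ : Dflip 𝕀 B x v H₁ = x := by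
    unfold Dflip; rw [if_pos ⟨hH₁, hxH₁⟩]
  -- ranks increase along arrows of the flipped orientation
  have hrank : ∀ a b, arr 𝕀 (Dflip 𝕀 B x v) a b →
      (if a = x then 1 else if a = v then 3 else if pth 𝕀 B v a then 4
        else if pth 𝕀 B x a then 2 else 0) * (n + 3) + rnk n 𝕀 B a <
      (if b = x then 1 else if b = v then 3 else if pth 𝕀 B v b then 4
        else if pth 𝕀 B x b then 2 else 0) * (n + 3) + rnk n 𝕀 B b := by
    rintro a b ⟨K, hCK, hbK, hba⟩
    have hbnda := rnk_bound (n := n) B a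
    have hbndb := rnk_bound (n := n) B b
    unfold Dflip at hCK
    by_cases hKE : B K = v ∧ x ∈ K.1
    · rw [if_pos hKE] at hCK
      have hax : a = x := hCK.symm
      rw [if_pos hax]
      by_cases hbv : b = v
      · rw [if_neg (show ¬ b = x by omega), if_pos hbv]
        omega
      · have hbx : b ≠ x := fun h => hba (h.trans hax.symm)
        have hpvb : pth 𝕀 B v b := arr_pth ⟨K, hKE.1, hbK, hbv⟩
        rw [if_neg hbx, if_neg hbv, if_pos hpvb]
        omega
    · rw [if_neg hKE] at hCK
      have harrB : arr 𝕀 B a b := ⟨K, hCK, hbK, hba⟩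
      have hrab : rnk n 𝕀 B a < rnk n 𝕀 B b := rnk_mono h𝕀 hBo hBac harrB
      by_cases hbx : b = x
      · have hax2 : a ≠ x := fun h => hba (hbx.trans h.symm)
        have hav : a ≠ v := fun h => hKE ⟨h ▸ hCK, hbx ▸ hbK⟩
        have hnva : ¬ pth 𝕀 B v a := fun hp => hstar a hax2 hp K (hbx ▸ hbK) hCK
        have hnxa : ¬ pth 𝕀 B x a := fun hp =>
          not_pth_self hBac x (pth_snoc hp ⟨K, hCK, hbx ▸ hbK, fun h => hax2 h.symm⟩)
        rw [if_neg hax2, if_neg hav, if_neg hnva, if_neg hnxa, if_pos hbx]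
        omega
      · by_cases hbv : b = v
        · have hav : a ≠ v := fun h => hba (hbv.trans h.symm)
          have hnva : ¬ pth 𝕀 B v a := fun hp =>
            not_pth_self hBac v (pth_snoc hp ⟨K, hCK, hbv ▸ hbK, fun h => hav h.symm⟩)
          rw [if_neg hbx, if_pos hbv]
          by_cases hax : a = x
          · rw [if_pos hax]; omega
          · rw [if_neg hax, if_neg hav, if_neg hnva]
            by_cases hxa : pth 𝕀 B x a
            · rw [if_pos hxa]; omega
            · rw [if_neg hxa]; omega
        · by_cases hax : a = x
          · have hpxb : pth 𝕀 B x b := arr_pth (hax ▸ harrB)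
            rw [if_pos hax, if_neg hbx, if_neg hbv]
            by_cases hvb : pth 𝕀 B v b
            · rw [if_pos hvb]; omega
            · rw [if_neg hvb, if_pos hpxb]; omega
          · by_cases hav : a = v
            · have hpvb : pth 𝕀 B v b := arr_pth (hav ▸ harrB)
              rw [if_neg hax, if_pos hav, if_neg hbx, if_neg hbv, if_pos hpvb]
              omega
            · by_cases hpva : pth 𝕀 B v a
              · have hpvb : pth 𝕀 B v b := pth_snoc hpva harrB
                rw [if_neg hax, if_neg hav, if_pos hpva, if_neg hbx, if_neg hbv, if_pos hpvb]
                omega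
              · by_cases hpxa : pth 𝕀 B x a
                · have hpxb : pth 𝕀 B x b := pth_snoc hpxa harrB
                  rw [if_neg hax, if_neg hav, if_neg hpva, if_pos hpxa, if_neg hbx, if_neg hbv]
                  by_cases hpvb : pth 𝕀 B v b
                  · rw [if_pos hpvb]; omega
                  · rw [if_neg hpvb, if_pos hpxb]; omega
                · rw [if_neg hax, if_neg hav, if_neg hpva, if_neg hpxa, if_neg hbx, if_neg hbv]
                  by_cases hpvb : pth 𝕀 B v b
                  · rw [if_pos hpvb]; omega
                  · rw [if_neg hpvb]
                    by_cases hpxb : pth 𝕀 B x b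
                    · rw [if_pos hpxb]; omega
                    · rw [if_neg hpxb]; omega
  have hCac : IsAcyclic 𝕀 (Dflip 𝕀 B x v) :=
    acyclic_of_rank (fun z => (if z = x then 1 else if z = v then 3 else if pth 𝕀 B v z then 4
      else if pth 𝕀 B x z then 2 else 0) * (n + 3) + rnk n 𝕀 B z) hrank
  refine ⟨Dflip 𝕀 B x v, ⟨⟨hCor, hCac⟩, ⟨hBo, hBac⟩, x, v, ?_, hx1, hxv, hvn, ?_⟩, ?_⟩
  · intro h
    have := congrFun h H₁
    rw [hCH₁, hH₁] at this
    omega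
  · intro H
    constructor
    · intro hne
      unfold Dflip at hne ⊢
      by_cases hc : B H = v ∧ x ∈ H.1
      · rw [if_pos hc]
        exact ⟨rfl, hc.1⟩
      · rw [if_neg hc] at hne
        exact absurd rfl hne
    · intro hxH hvH
      unfold Dflip
      by_cases hc : B H = v ∧ x ∈ H.1
      · rw [if_pos hc]
        exact ⟨fun _ => hc.1, fun _ => rfl⟩
      · rw [if_neg hc]
        exact ⟨fun h => absurd (hK3 H hxH hvH h) not_false,
          fun h => absurd ⟨h, hxH⟩ hc⟩
  · intro H hne
    unfold Dflip at hne
    by_cases hc : B H = v ∧ x ∈ H.1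
    · exact hc.1
    · rw [if_neg hc] at hne
      exact absurd rfl hne

end Dev8

/-- For an interval hypergraph `𝕀` closed under intersection, the
map `(i,j) ↦ A_{ij}` is a bijection from `ℐ𝒥_𝕀` to the join irreducible elements of
`P_𝕀` (elements that are not minimal and cover exactly one element). -/
theorem stmt19 (n : ℕ) (hn : 1 ≤ n) (𝕀 : Finset (Finset ℕ))
    (h𝕀 : IsIntervalHypergraph n 𝕀) (hcl : ClosedUnderIntersection 𝕀)
    (Jp : ℕ → ℕ → Finset ℕ) (μ : ℕ → ℕ → ℕ) (Ap : ℕ → ℕ → Edge 𝕀 → ℕ)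
    (hfam : ∀ i j, 1 ≤ i → i < j → j ≤ n → (∃ I ∈ 𝕀, i ∈ I ∧ j ∈ I) →
      IsJij 𝕀 i j (Jp i j) ∧ IsLeast ((Jp i j : Finset ℕ) : Set ℕ) (μ i j) ∧
        IsAij 𝕀 j (μ i j) (Ap i j)) :
    (∀ i j, InIJ n 𝕀 i j (μ i j) →
      AcycOr 𝕀 (Ap i j) ∧
      (¬∀ B, AcycOr 𝕀 B → leP n 𝕀 (Ap i j) B) ∧
      (∃! B, AcycOr 𝕀 B ∧ CoversP n 𝕀 B (Ap i j))) ∧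
    (∀ i j k l, InIJ n 𝕀 i j (μ i j) → InIJ n 𝕀 k l (μ k l) →
      Ap i j = Ap k l → i = k ∧ j = l) ∧
    (∀ B, AcycOr 𝕀 B →
      (¬∀ C, AcycOr 𝕀 C → leP n 𝕀 B C) →
      (∃! C, AcycOr 𝕀 C ∧ CoversP n 𝕀 C B) →
      ∃ i j, InIJ n 𝕀 i j (μ i j) ∧ Ap i j = B) := by

  refine ⟨?_, ?_, ?_⟩
  · -- part 1
    intro i j hIJ
    obtain ⟨hi1, hij, hjn, hex, hgr⟩ := hIJ
    obtain ⟨hJp, hLμ, hAij⟩ := hfam i j hi1 hij hjn hex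
    obtain ⟨H₀, hj0, hμ0, hlb, hiH0⟩ := exists_H0 h𝕀 hJp hLμ hex hij
    have hiJp : i ∈ Jp i j := (hJp i).2 (fun I hI a b => a)
    have hμi : μ i j ≤ i := hLμ.2 (by exact_mod_cast hiJp)
    have hμj : μ i j < j := lt_of_le_of_lt hμi hij
    have hi : inS 𝕀 j (μ i j) i := hgr.1
    have hmax : ∀ m, inS 𝕀 j (μ i j) m → m ≤ i := fun m hm => hgr.2 hm
    have hNE : ∀ K : Edge 𝕀, j ∈ K.1 → i ∈ K.1 → μ i j ∈ K.1 := fun K hjK hiK =>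
      (hJp (μ i j)).1 hLμ.1 K.1 K.2 hiK hjK
    have hAp : Ap i j = Aform 𝕀 j (μ i j) := IsAij_eq h𝕀 hAij
    refine ⟨?_, ?_, ?_⟩
    · rw [hAp]; exact ⟨Aform_or h𝕀, Aform_acyclic h𝕀 hμj⟩
    · intro hall
      have hCac : AcycOr 𝕀 (Cform 𝕀 i j (μ i j)) :=
        ⟨Cform_or h𝕀, Cform_acyclic h𝕀 hμj hi⟩
      have hle := leP_le (hall _ hCac) H₀
      rw [hAp] at hle
      unfold Aform Cform at hle
      rw [if_pos ⟨hj0, hlb⟩, if_pos ⟨hj0, hlb⟩, if_pos hiH0] at hle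
      omega
    · obtain ⟨hex1, huniq⟩ := cover_Aform h𝕀 hj0 hμ0 hlb hμj hi hmax hNE
      rw [hAp]
      exact ⟨Cform 𝕀 i j (μ i j), ⟨hex1.1, hex1.2⟩, fun B' hB' => huniq B' hB'⟩
  · -- part 2 : injectivity
    intro i j k l hIJ1 hIJ2 heq
    obtain ⟨hi1, hij, hjn, hex, hgr⟩ := hIJ1
    obtain ⟨hk1, hkl, hln, hex2, hgr2⟩ := hIJ2
    obtain ⟨hJp, hLμ, hAij⟩ := hfam i j hi1 hij hjn hex
    obtain ⟨hJp2, hLμ2, hAij2⟩ := hfam k l hk1 hkl hln hex2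
    obtain ⟨H₀, hj0, hμ0, hlb, hiH0⟩ := exists_H0 h𝕀 hJp hLμ hex hij
    obtain ⟨H₀', hj0', hμ0', hlb', hkH0⟩ := exists_H0 h𝕀 hJp2 hLμ2 hex2 hkl
    have hiJp : i ∈ Jp i j := (hJp i).2 (fun I hI a b => a)
    have hμi : μ i j ≤ i := hLμ.2 (by exact_mod_cast hiJp)
    have hkJp : k ∈ Jp k l := (hJp2 k).2 (fun I hI a b => a)
    have hμk : μ k l ≤ k := hLμ2.2 (by exact_mod_cast hkJp)
    have hAA : Aform 𝕀 j (μ i j) = Aform 𝕀 l (μ k l) := by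
      rw [← IsAij_eq h𝕀 hAij, ← IsAij_eq h𝕀 hAij2, heq]
    have hemin0 : emin H₀.1 = μ i j :=
      le_antisymm (emin_le H₀ hμ0) (hlb _ (emin_mem h𝕀 H₀))
    have hemin0' : emin H₀'.1 = μ k l :=
      le_antisymm (emin_le H₀' hμ0') (hlb' _ (emin_mem h𝕀 H₀'))
    -- evaluate at H₀ to get j = l
    have hjl : j = l := by
      have h := congrFun hAA H₀
      unfold Aform at h
      rw [if_pos ⟨hj0, hlb⟩] at h
      by_cases hc : l ∈ H₀.1 ∧ ∀ x ∈ H₀.1, μ k l ≤ x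
      · rw [if_pos hc] at h; exact h
      · rw [if_neg hc, hemin0] at h; omega
    subst hjl
    -- evaluate at H₀' and H₀ to get equality of the μ's
    have hμμ : μ i j = μ k j := by
      have hle1 : μ i j ≤ μ k j := by
        by_cases hc : j ∈ H₀'.1 ∧ ∀ x ∈ H₀'.1, μ i j ≤ x
        · exact hc.2 _ hμ0'
        · have h1 := congrFun hAA H₀'
          unfold Aform at h1
          rw [if_neg hc, if_pos ⟨hj0', hlb'⟩, hemin0'] at h1
          omega
      have hle2 : μ k j ≤ μ i j := by
        by_cases hc : j ∈ H₀.1 ∧ ∀ x ∈ H₀.1, μ k j ≤ x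
        · exact hc.2 _ hμ0
        · have h2 := congrFun hAA H₀
          unfold Aform at h2
          rw [if_pos ⟨hj0, hlb⟩, if_neg hc, hemin0] at h2
          omega
      omega
    rw [hμμ] at hgr
    exact ⟨hgr.unique hgr2, rfl⟩
  · -- part 3 : surjectivity
    classical
    intro B hBac hnotmin hcov
    obtain ⟨hBo, hBacy⟩ := id hBac
    obtain ⟨C₀, ⟨hC₀ac, hC₀cov⟩, hC₀uniq⟩ := hcov
    have hclimb := climb (n := n) (B := B) (C0 := C₀) (fun C hC => hC₀uniq C hC)
    -- the unique cover is itself a flip into B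
    obtain ⟨EE, hC₀EE, hEEB⟩ := ltP_cases hC₀cov.1
    have hEEne : EE ≠ B := by
      obtain ⟨-, -, u, w, hne, -⟩ := hEEB
      exact hne
    have hC₀EE' : C₀ = EE := by
      by_contra hne
      exact hC₀cov.2 ⟨EE, hEEB.1, ⟨hC₀EE, hne⟩, Relation.ReflTransGen.single hEEB, hEEne⟩
    subst hC₀EE'
    obtain ⟨-, -, u0, v0, hne0, hu01, hu0v0, hv0n, hcond0⟩ := id hEEB
    -- a raised edge with value v0
    have hch : ∃ H : Edge 𝕀, C₀ H ≠ B H := by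
      by_contra h
      push_neg at h
      exact hne0 (funext h)
    obtain ⟨Hc, hHc⟩ := hch
    obtain ⟨hCu, hBv⟩ := (hcond0 Hc).1 hHc
    have hu0Hc : u0 ∈ Hc.1 := hCu ▸ hC₀ac.1 Hc
    have hHcraised : emin Hc.1 < B Hc := by
      have := emin_le Hc hu0Hc
      omega
    -- every raised edge has value v0
    have hallv : ∀ H : Edge 𝕀, B H ≠ emin H.1 → B H = v0 := by
      intro H2 hH2
      by_contra hv2
      have h2r : emin H2.1 < B H2 := lt_of_le_of_ne (emin_le H2 (hBo H2)) (Ne.symm hH2)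
      obtain ⟨H₁', hH₁'mem, hH₁'min⟩ := Finset.exists_min_image
        (Finset.univ.filter (fun K : Edge 𝕀 => B K = B H2)) (fun K => emin K.1)
        ⟨H2, by simp⟩
      simp only [Finset.mem_filter, Finset.mem_univ, true_and] at hH₁'mem
      have hH₁'r : emin H₁'.1 < B H₁' := by
        have h1 := hH₁'min H2 (by simp)
        have h2 := emin_le H2 (hBo H2)
        omega
      obtain ⟨C₂, hC₂flip, hC₂sup⟩ := claimA h𝕀 hBac H₁' rfl hH₁'r
        (fun K hK => hH₁'min K (by simp [hK, hH₁'mem]))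
      have hC₂ne : C₂ ≠ B := by
        obtain ⟨-, -, u, w, hne, -⟩ := hC₂flip
        exact hne
      have hC₂le := hclimb C₂ hC₂flip.1 ⟨Relation.ReflTransGen.single hC₂flip, hC₂ne⟩
      apply hne0
      funext H
      by_cases hv : B H = B H2
      · by_contra hx
        have h5 := ((hcond0 H).1 hx).2
        exact hv2 (by omega)
      · have h1 : C₂ H = B H := by
          by_contra hx
          exact hv (by rw [hC₂sup H hx, hH₁'mem])
        have h2 := leP_le hC₂le H
        have h3 := leP_le hC₀cov.1.1 H
        omega
    have hBHcv0 : B Hc = v0 := hallv Hc (by omega)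
    -- the raised edge with minimal min
    obtain ⟨H₀, hH₀mem, hH₀min⟩ := Finset.exists_min_image
      (Finset.univ.filter (fun K : Edge 𝕀 => B K ≠ emin K.1)) (fun K => emin K.1)
      ⟨Hc, by simp; omega⟩
    simp only [Finset.mem_filter, Finset.mem_univ, true_and] at hH₀mem
    have hBH₀ : B H₀ = v0 := hallv H₀ hH₀mem
    have hj0 : v0 ∈ H₀.1 := hBH₀ ▸ hBo H₀
    have hμ0 : emin H₀.1 ∈ H₀.1 := emin_mem h𝕀 H₀
    have hlb : ∀ x ∈ H₀.1, emin H₀.1 ≤ x := fun x hx => emin_le H₀ hx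
    have hμv : emin H₀.1 < v0 := by
      have := lt_of_le_of_ne (emin_le H₀ (hBo H₀)) (Ne.symm hH₀mem)
      omega
    set μ' := emin H₀.1 with hμ'def
    -- B is the A-form
    have hBA : B = Aform 𝕀 v0 μ' := by
      funext K
      unfold Aform
      by_cases hc : v0 ∈ K.1 ∧ ∀ x ∈ K.1, μ' ≤ x
      · rw [if_pos hc]
        by_contra hBK
        have hBKe : B K = emin K.1 := by
          by_contra hx
          exact hBK (hallv K hx)
        have hemlt : emin K.1 < v0 := by
          rcases lt_or_eq_of_le (emin_le K hc.1) with h | h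
          · exact h
          · rw [← hBKe] at h; exact absurd h hBK
        refine absurd (two_cycle H₀ K ?_ ?_ ?_) (not_not.2 hBacy)
        · rw [hBKe]
          exact edge_between h𝕀 H₀ hμ0 hj0 (hc.2 _ (emin_mem h𝕀 K)) (le_of_lt hemlt)
        · rw [hBKe, hBH₀]; omega
        · rw [hBH₀]; exact hc.1
      · rw [if_neg hc]
        by_contra hBK
        have hr : B K = v0 := hallv K hBK
        refine hc ⟨hr ▸ hBo K, fun x hx => le_trans ?_ (emin_le K hx)⟩
        exact hH₀min K (by simp [hBK])
    -- define i as the max of the S-set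
    have hμS : inS 𝕀 v0 μ' μ' :=
      ⟨le_refl _, hμv, fun J hJ hsub hm y hy => (hsub y hy).1⟩
    obtain ⟨i, hiS, himax⟩ := Finset.exists_max_image
      ((Finset.Ico μ' v0).filter (fun m => inS 𝕀 v0 μ' m)) id
      ⟨μ', by simp [Finset.mem_Ico, hμS, le_refl, hμv]⟩
    simp only [Finset.mem_filter, Finset.mem_Ico] at hiS
    have hi : inS 𝕀 v0 μ' i := hiS.2
    have himax' : ∀ m, inS 𝕀 v0 μ' m → m ≤ i := by
      intro m hm
      have := himax m (by simp [Finset.mem_filter, Finset.mem_Ico, hm, hm.1, hm.2.1])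
      simpa using this
    have hiH₀ : i ∈ H₀.1 := edge_between h𝕀 H₀ hμ0 hj0 hi.1 (le_of_lt hi.2.1)
    -- C₀ is the i-th C form
    have hflipA : FlipStep n 𝕀 C₀ (Aform 𝕀 v0 μ') := by rw [← hBA]; exact hEEB
    obtain ⟨us, husS, hC₀C⟩ := flip_into_Aform h𝕀 hj0 hμ0 hlb hμv hflipA
    have hflipi := flip_Cform_Aform h𝕀 hj0 hμ0 hlb hμv hi
    have hCiB : FlipStep n 𝕀 (Cform 𝕀 i v0 μ') B := by rw [hBA]; exact hflipi
    have hCine : Cform 𝕀 i v0 μ' ≠ B := by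
      obtain ⟨-, -, u, w, hne, -⟩ := hCiB
      exact hne
    have hlei := hclimb (Cform 𝕀 i v0 μ') hCiB.1 ⟨Relation.ReflTransGen.single hCiB, hCine⟩
    have husi : us = i := by
      have h1 := leP_le hlei H₀
      rw [hC₀C] at h1
      unfold Cform at h1
      have husH₀ : us ∈ H₀.1 := edge_between h𝕀 H₀ hμ0 hj0 husS.1 (le_of_lt husS.2.1)
      rw [if_pos ⟨hj0, hlb⟩, if_pos hiH₀, if_pos (⟨hj0, hlb⟩ : v0 ∈ H₀.1 ∧ ∀ x ∈ H₀.1, μ' ≤ x),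
        if_pos husH₀] at h1
      have h2 := himax' us husS
      omega
    rw [husi] at hC₀C
    -- every edge containing i and v0 contains μ'
    have hNE : ∀ K : Edge 𝕀, v0 ∈ K.1 → i ∈ K.1 → μ' ∈ K.1 := by
      intro K hvK hiK
      by_contra hμK
      have hem : μ' < emin K.1 := by
        rcases le_or_gt (emin K.1) μ' with h | h
        · exact absurd (edge_between h𝕀 K (emin_mem h𝕀 K) hiK h hi.1) hμK
        · exact h
      have hflipμ := flip_Cform_Aform h𝕀 hj0 hμ0 hlb hμv hμS
      have hCμB : FlipStep n 𝕀 (Cform 𝕀 μ' v0 μ') B := by rw [hBA]; exact hflipμ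
      have hCμne : Cform 𝕀 μ' v0 μ' ≠ B := by
        obtain ⟨-, -, u, w, hne, -⟩ := hCμB
        exact hne
      have hleμ := hclimb (Cform 𝕀 μ' v0 μ') hCμB.1
        ⟨Relation.ReflTransGen.single hCμB, hCμne⟩
      have h1 := leP_le hleμ K
      rw [hC₀C] at h1
      unfold Cform at h1
      have hcK : v0 ∈ K.1 ∧ ∀ x ∈ K.1, μ' ≤ x :=
        ⟨hvK, fun x hx => le_trans (le_of_lt hem) (emin_le K hx)⟩
      have hμK' : μ' ∉ K.1 := hμK
      rw [if_pos hcK, if_neg hμK', if_pos (hcK : v0 ∈ K.1 ∧ ∀ x ∈ K.1, μ' ≤ x), if_pos hiK] at h1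
      have := hi.2.1
      omega
    -- apply the family hypothesis
    have h1i : 1 ≤ i := by
      have h1 := (edge_pos h𝕀 H₀ hμ0).1
      have h2 := hi.1
      omega
    have hexI : ∃ I ∈ 𝕀, i ∈ I ∧ v0 ∈ I := ⟨H₀.1, H₀.2, hiH₀, hj0⟩
    obtain ⟨hJp, hLμ, hAij⟩ := hfam i v0 h1i hi.2.1 hv0n hexI
    have hμin : μ i v0 ∈ H₀.1 := (hJp _).1 hLμ.1 H₀.1 H₀.2 hiH₀ hj0
    have hμJp : μ' ∈ Jp i v0 := (hJp μ').2 (fun I hI hiI hvI => hNE ⟨I, hI⟩ hvI hiI)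
    have heqμ : μ i v0 = μ' := by
      have h1 := hLμ.2 (by exact_mod_cast hμJp)
      have h2 := hlb _ hμin
      omega
    refine ⟨i, v0, ⟨h1i, hi.2.1, hv0n, hexI, ?_⟩, ?_⟩
    · rw [heqμ]
      exact ⟨hi, fun m hm => himax' m hm⟩
    · rw [IsAij_eq h𝕀 hAij, heqμ, ← hBA]
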